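/- Let θ > p be the exponent from the integral estimate for optimal curves (depending only on M, δ, p, T). Then there exist constants K₂ = K₂(M,δ,p,T) and K₃ = K₃(M,δ,p,T) > 0 such that for every τ > 0, every x₀ ∈ ℝ^N, and all t₀ < t₁ ≤ T − τ with t₁ − t₀ ≤ K₃ τ^{(2θp − p − θ)/(p(θ−1))}, one has |u(x₀,t₀) − u(x₀,t₁)| ≤ K₂ τ^{−(θ−p)/θ} (t₁ − t₀)^{(θ−p)/θ}. -/

import Mathlib

open MeasureTheory Set intervalIntegral

noncomputable section

/-- The curve starting at `x` at time `t` with (a.e.) derivative `v`. -/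
def curveOf {N : ℕ} (x : EuclideanSpace ℝ (Fin N)) (t : ℝ)
    (v : ℝ → EuclideanSpace ℝ (Fin N)) : ℝ → EuclideanSpace ℝ (Fin N) :=
  fun s => x + ∫ r in t..s, v r

/-- The cost of the curve starting at `x` at time `t` with derivative `v`:
`∫_t^T a(x(s),s) |f(x(s),s) + x'(s)|^p ds + g(x(T))`. -/
def costOf {N : ℕ} (T p : ℝ) (a : EuclideanSpace ℝ (Fin N) → ℝ → ℝ)
    (f : EuclideanSpace ℝ (Fin N) → ℝ → EuclideanSpace ℝ (Fin N))
    (g : EuclideanSpace ℝ (Fin N) → ℝ)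
    (x : EuclideanSpace ℝ (Fin N)) (t : ℝ) (v : ℝ → EuclideanSpace ℝ (Fin N)) : ℝ :=
  (∫ s in t..T, a (curveOf x t v s) s * ‖f (curveOf x t v s) s + v s‖ ^ p)
    + g (curveOf x t v T)

/-- A curve (given through its derivative `v`) is admissible for initial time `t` if its
derivative belongs to `L^p([t,T])`. -/
def AdmissibleDeriv {N : ℕ} (T p t : ℝ) (v : ℝ → EuclideanSpace ℝ (Fin N)) : Prop :=
  MemLp v (ENNReal.ofReal p) (volume.restrict (Icc t T))

/-- The value function of the calculus of variations problem. -/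
def valueFn {N : ℕ} (T p : ℝ) (a : EuclideanSpace ℝ (Fin N) → ℝ → ℝ)
    (f : EuclideanSpace ℝ (Fin N) → ℝ → EuclideanSpace ℝ (Fin N))
    (g : EuclideanSpace ℝ (Fin N) → ℝ)
    (x : EuclideanSpace ℝ (Fin N)) (t : ℝ) : ℝ :=
  sInf {c : ℝ | ∃ v, AdmissibleDeriv T p t v ∧ costOf T p a f g x t v = c}

/-- A curve (given through its derivative `v`) is optimal for the initial condition `(x, t)`
if it is admissible and its cost realizes the infimum defining `valueFn`. -/
def IsOptimalCurve {N : ℕ} (T p : ℝ) (a : EuclideanSpace ℝ (Fin N) → ℝ → ℝ)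
    (f : EuclideanSpace ℝ (Fin N) → ℝ → EuclideanSpace ℝ (Fin N))
    (g : EuclideanSpace ℝ (Fin N) → ℝ)
    (x : EuclideanSpace ℝ (Fin N)) (t : ℝ) (v : ℝ → EuclideanSpace ℝ (Fin N)) : Prop :=
  AdmissibleDeriv T p t v ∧ costOf T p a f g x t v = valueFn T p a f g x t

/-- The standing assumptions : `a`, `f`, `g` are continuous, bounded by `M`, and `a ≥ δ`. -/
def StandardHyps {N : ℕ} (T M δ : ℝ) (a : EuclideanSpace ℝ (Fin N) → ℝ → ℝ)
    (f : EuclideanSpace ℝ (Fin N) → ℝ → EuclideanSpace ℝ (Fin N))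
    (g : EuclideanSpace ℝ (Fin N) → ℝ) : Prop :=
  ContinuousOn (fun q : EuclideanSpace ℝ (Fin N) × ℝ => a q.1 q.2) (univ ×ˢ Icc 0 T) ∧
  ContinuousOn (fun q : EuclideanSpace ℝ (Fin N) × ℝ => f q.1 q.2) (univ ×ˢ Icc 0 T) ∧
  Continuous g ∧
  (∀ x t, t ∈ Icc 0 T → |a x t| ≤ M) ∧
  (∀ x t, t ∈ Icc 0 T → ‖f x t‖ ≤ M) ∧
  (∀ x, |g x| ≤ M) ∧
  (∀ x t, t ∈ Icc 0 T → δ ≤ a x t)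


section Helpers

lemma rpow_add_le' {A B q : ℝ} (hA : 0 ≤ A) (hB : 0 ≤ B) (hq : 0 ≤ q) :
    (A + B) ^ q ≤ 2 ^ q * (A ^ q + B ^ q) := by
  have h1 : A + B ≤ 2 * max A B := by
    rcases le_total A B with h | h
    · simp [max_eq_right h]; linarith
    · simp [max_eq_left h]; linarith
  have h2 : (A + B) ^ q ≤ (2 * max A B) ^ q :=
    Real.rpow_le_rpow (by positivity) h1 hq
  have h3 : (2 * max A B) ^ q = 2 ^ q * (max A B) ^ q :=
    Real.mul_rpow (by norm_num) (le_max_of_le_left hA)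
  have h4 : (max A B) ^ q ≤ A ^ q + B ^ q := by
    rcases le_total A B with h | h
    · rw [max_eq_right h]; exact le_add_of_nonneg_left (Real.rpow_nonneg hA q)
    · rw [max_eq_left h]; exact le_add_of_nonneg_right (Real.rpow_nonneg hB q)
  calc (A+B)^q ≤ 2 ^ q * (max A B) ^ q := h3 ▸ h2
    _ ≤ 2 ^ q * (A ^ q + B ^ q) := by
        have : (0:ℝ) ≤ 2 ^ q := Real.rpow_nonneg (by norm_num) q
        nlinarith

variable {N : ℕ} {T p M δ : ℝ}
  {a : EuclideanSpace ℝ (Fin N) → ℝ → ℝ}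
  {f : EuclideanSpace ℝ (Fin N) → ℝ → EuclideanSpace ℝ (Fin N)}
  {g : EuclideanSpace ℝ (Fin N) → ℝ}

lemma memLp_integrableOn {t : ℝ} {v : ℝ → EuclideanSpace ℝ (Fin N)} (hp : 1 ≤ p)
    (hv : MemLp v (ENNReal.ofReal p) (volume.restrict (Icc t T))) :
    IntegrableOn v (Icc t T) := by
  have h1 : (1 : ENNReal) ≤ ENNReal.ofReal p := by
    rw [← ENNReal.ofReal_one]; exact ENNReal.ofReal_le_ofReal hp
  exact memLp_one_iff_integrable.mp (hv.mono_exponent h1)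

lemma intervalIntegrable_of_integrableOn {t s s' : ℝ} {v : ℝ → EuclideanSpace ℝ (Fin N)}
    (hv : IntegrableOn v (Icc t T)) (h1 : t ≤ s) (h2 : s ≤ s') (h3 : s' ≤ T) :
    IntervalIntegrable v volume s s' := by
  rw [intervalIntegrable_iff, uIoc_of_le h2]
  exact hv.mono_set (fun r hr => ⟨le_trans h1 (le_of_lt hr.1), le_trans hr.2 h3⟩)

lemma intervalIntegrableR_of_integrableOn {t s s' : ℝ} {v : ℝ → ℝ}
    (hv : IntegrableOn v (Icc t T)) (h1 : t ≤ s) (h2 : s ≤ s') (h3 : s' ≤ T) :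
    IntervalIntegrable v volume s s' := by
  rw [intervalIntegrable_iff, uIoc_of_le h2]
  exact hv.mono_set (fun r hr => ⟨le_trans h1 (le_of_lt hr.1), le_trans hr.2 h3⟩)

lemma curveOf_continuousOn {x : EuclideanSpace ℝ (Fin N)} {t : ℝ}
    {v : ℝ → EuclideanSpace ℝ (Fin N)} (ht : t ≤ T) (hv : IntegrableOn v (Icc t T)) :
    ContinuousOn (curveOf x t v) (Icc t T) := by
  have := continuousOn_primitive_interval (a := t) (b := T) (f := v) (μ := volume)
    (by rwa [uIcc_of_le ht])
  rw [uIcc_of_le ht] at this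
  exact (continuousOn_const.add this : ContinuousOn (fun s => x + ∫ r in t..s, v r) (Icc t T))

lemma integrand_integrableOn {x : EuclideanSpace ℝ (Fin N)} {t : ℝ}
    {v : ℝ → EuclideanSpace ℝ (Fin N)}
    (hp : 1 ≤ p) (hM : 0 < M)
    (hCa : ContinuousOn (fun q : EuclideanSpace ℝ (Fin N) × ℝ => a q.1 q.2) (univ ×ˢ Icc 0 T))
    (hCf : ContinuousOn (fun q : EuclideanSpace ℝ (Fin N) × ℝ => f q.1 q.2) (univ ×ˢ Icc 0 T))
    (hba : ∀ x t, t ∈ Icc 0 T → |a x t| ≤ M)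
    (hbf : ∀ x t, t ∈ Icc 0 T → ‖f x t‖ ≤ M)
    (ht0 : 0 ≤ t) (htT : t ≤ T)
    (hv : MemLp v (ENNReal.ofReal p) (volume.restrict (Icc t T))) :
    IntegrableOn
      (fun s => a (curveOf x t v s) s * ‖f (curveOf x t v s) s + v s‖ ^ p) (Icc t T) := by
  have hp0 : (0:ℝ) ≤ p := le_trans zero_le_one hp
  set y := curveOf x t v with hy
  have hyc : ContinuousOn y (Icc t T) := curveOf_continuousOn htT (memLp_integrableOn hp hv)
  have hmap : MapsTo (fun s => (y s, s)) (Icc t T) (univ ×ˢ Icc 0 T) :=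
    fun s hs => ⟨mem_univ _, ⟨le_trans ht0 hs.1, hs.2⟩⟩
  have hprod : ContinuousOn (fun s => (y s, s)) (Icc t T) := hyc.prodMk continuousOn_id
  have hA : ContinuousOn (fun s => a (y s) s) (Icc t T) := hCa.comp hprod hmap
  have hF : ContinuousOn (fun s => f (y s) s) (Icc t T) := hCf.comp hprod hmap
  have hAm : AEStronglyMeasurable (fun s => a (y s) s) (volume.restrict (Icc t T)) :=
    (hA.aemeasurable measurableSet_Icc).aestronglyMeasurable
  have hFm : AEStronglyMeasurable (fun s => f (y s) s) (volume.restrict (Icc t T)) :=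
    (hF.aemeasurable measurableSet_Icc).aestronglyMeasurable
  have hsum : AEStronglyMeasurable (fun s => f (y s) s + v s) (volume.restrict (Icc t T)) :=
    hFm.add hv.aestronglyMeasurable
  have hnorm : AEStronglyMeasurable (fun s => ‖f (y s) s + v s‖ ^ p)
      (volume.restrict (Icc t T)) := by
    rw [aestronglyMeasurable_iff_aemeasurable]
    exact (Real.continuous_rpow_const hp0).measurable.comp_aemeasurable
      hsum.norm.aemeasurable
  have hFm' : AEStronglyMeasurable
      (fun s => a (y s) s * ‖f (y s) s + v s‖ ^ p) (volume.restrict (Icc t T)) := hAm.mul hnorm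
  have hvp : Integrable (fun s => ‖v s‖ ^ p) (volume.restrict (Icc t T)) := by
    have := hv.integrable_norm_rpow (by simp [ENNReal.ofReal_eq_zero]; linarith)
      ENNReal.ofReal_ne_top
    rwa [ENNReal.toReal_ofReal hp0] at this
  have hG : Integrable (fun s => M * (2 ^ p * (M ^ p + ‖v s‖ ^ p)))
      (volume.restrict (Icc t T)) := (((integrable_const _).add hvp).const_mul _).const_mul _
  refine hG.mono' hFm' ?_
  filter_upwards [ae_restrict_mem measurableSet_Icc] with s hs
  have hs0T : s ∈ Icc (0:ℝ) T := ⟨le_trans ht0 hs.1, hs.2⟩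
  have h1 : |a (y s) s| ≤ M := hba _ _ hs0T
  have h2 : ‖f (y s) s + v s‖ ≤ M + ‖v s‖ :=
    le_trans (norm_add_le _ _) (add_le_add_left (hbf _ _ hs0T) _)
  have h3 : ‖f (y s) s + v s‖ ^ p ≤ (M + ‖v s‖) ^ p :=
    Real.rpow_le_rpow (norm_nonneg _) h2 hp0
  have h4 : (M + ‖v s‖) ^ p ≤ 2 ^ p * (M ^ p + ‖v s‖ ^ p) :=
    rpow_add_le' (le_of_lt hM) (norm_nonneg _) hp0
  have h5 : (0:ℝ) ≤ ‖f (y s) s + v s‖ ^ p := Real.rpow_nonneg (norm_nonneg _) _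
  rw [Real.norm_eq_abs, abs_mul]
  calc |a (y s) s| * |‖f (y s) s + v s‖ ^ p|
      = |a (y s) s| * ‖f (y s) s + v s‖ ^ p := by rw [abs_of_nonneg h5]
    _ ≤ M * (2 ^ p * (M ^ p + ‖v s‖ ^ p)) := by
        apply mul_le_mul h1 (le_trans h3 h4) h5 (le_of_lt hM)

lemma costOf_lower_bound (hyp : StandardHyps T M δ a f g) (hδ : 0 < δ)
    {x : EuclideanSpace ℝ (Fin N)} {t : ℝ} (ht0 : 0 ≤ t) (htT : t ≤ T)
    (v : ℝ → EuclideanSpace ℝ (Fin N)) : -M ≤ costOf T p a f g x t v := by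
  obtain ⟨hCa, hCf, hCg, hba, hbf, hbg, hδa⟩ := hyp
  have h1 : 0 ≤ ∫ s in t..T, a (curveOf x t v s) s * ‖f (curveOf x t v s) s + v s‖ ^ p := by
    apply intervalIntegral.integral_nonneg htT
    intro u hu
    have hu0T : u ∈ Icc (0:ℝ) T := ⟨le_trans ht0 hu.1, hu.2⟩
    exact mul_nonneg (le_trans (le_of_lt hδ) (hδa _ _ hu0T)) (Real.rpow_nonneg (norm_nonneg _) _)
  have h2 : -M ≤ g (curveOf x t v T) := neg_le_of_abs_le (hbg _)
  unfold costOf; linarith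

lemma valueFn_le_costOf (hyp : StandardHyps T M δ a f g) (hδ : 0 < δ)
    {x : EuclideanSpace ℝ (Fin N)} {t : ℝ} (ht0 : 0 ≤ t) (htT : t ≤ T)
    {v : ℝ → EuclideanSpace ℝ (Fin N)} (hadm : AdmissibleDeriv T p t v) :
    valueFn T p a f g x t ≤ costOf T p a f g x t v := by
  apply csInf_le
  · exact ⟨-M, fun c ⟨v', _, hc⟩ => hc ▸ costOf_lower_bound hyp hδ ht0 htT v'⟩
  · exact ⟨v, hadm, rfl⟩

end Helpers

section Easy
variable {N : ℕ} {T p M δ : ℝ}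
  {a : EuclideanSpace ℝ (Fin N) → ℝ → ℝ}
  {f : EuclideanSpace ℝ (Fin N) → ℝ → EuclideanSpace ℝ (Fin N)}
  {g : EuclideanSpace ℝ (Fin N) → ℝ}

lemma valueFn_easy_dir (hyp : StandardHyps T M δ a f g) (hδ : 0 < δ) (hp : 1 ≤ p) (hM : 0 < M)
    {x₀ : EuclideanSpace ℝ (Fin N)} {t₀ t₁ : ℝ} (h0 : 0 ≤ t₀) (h01 : t₀ ≤ t₁) (h1T : t₁ ≤ T)
    {v₁ : ℝ → EuclideanSpace ℝ (Fin N)} (hopt : IsOptimalCurve T p a f g x₀ t₁ v₁) :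
    valueFn T p a f g x₀ t₀ ≤ valueFn T p a f g x₀ t₁ + M * M ^ p * (t₁ - t₀) := by
  obtain ⟨hadm₁, hcost₁⟩ := hopt
  obtain ⟨hCa, hCf, hCg, hba, hbf, hbg, hδa⟩ := hyp
  have h0T : t₀ ≤ T := le_trans h01 h1T
  have h10 : 0 ≤ t₁ := le_trans h0 h01
  set v : ℝ → EuclideanSpace ℝ (Fin N) := (Ici t₁).indicator v₁ with hv_def
  -- admissibility of v at t₀
  have hset : Ici t₁ ∩ Icc t₀ T = Icc t₁ T := by
    ext r; simp only [mem_inter_iff, mem_Ici, mem_Icc]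
    exact ⟨fun ⟨a1, _, a3⟩ => ⟨a1, a3⟩, fun ⟨a1, a2⟩ => ⟨a1, le_trans h01 a1, a2⟩⟩
  have hadm : AdmissibleDeriv T p t₀ v := by
    unfold AdmissibleDeriv
    rw [hv_def, memLp_indicator_iff_restrict measurableSet_Ici,
      Measure.restrict_restrict measurableSet_Ici, hset]
    exact hadm₁
  have hvI : IntegrableOn v (Icc t₀ T) := memLp_integrableOn hp hadm
  have hv₁I : IntegrableOn v₁ (Icc t₁ T) := memLp_integrableOn hp hadm₁
  -- the integral of v vanishes up to t₁
  have key1 : ∀ s ∈ Icc t₀ t₁, (∫ r in t₀..s, v r) = 0 := by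
    intro s hs
    rw [integral_of_le hs.1, hv_def]
    rw [setIntegral_indicator measurableSet_Ici]
    have hsub : Ioc t₀ s ∩ Ici t₁ ⊆ {t₁} := by
      rintro r ⟨hr1, hr2⟩
      exact mem_singleton_iff.mpr (le_antisymm (le_trans hr1.2 hs.2) hr2)
    rw [Measure.restrict_eq_zero.mpr (measure_mono_null hsub Real.volume_singleton),
      integral_zero_measure]
  have key2 : ∀ s ∈ Icc t₀ t₁, curveOf x₀ t₀ v s = x₀ := by
    intro s hs; unfold curveOf; rw [key1 s hs, add_zero]
  have key3 : ∀ s ∈ Icc t₁ T, curveOf x₀ t₀ v s = curveOf x₀ t₁ v₁ s := by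
    intro s hs
    have i1 : IntervalIntegrable v volume t₀ t₁ :=
      intervalIntegrable_of_integrableOn hvI le_rfl h01 h1T
    have i2 : IntervalIntegrable v volume t₁ s :=
      intervalIntegrable_of_integrableOn hvI h01 hs.1 hs.2
    have hEq : EqOn v v₁ (uIcc t₁ s) := by
      rw [uIcc_of_le hs.1]
      intro r hr
      exact indicator_of_mem (mem_Ici.mpr hr.1) v₁
    unfold curveOf
    rw [← integral_add_adjacent_intervals i1 i2, key1 t₁ ⟨h01, le_rfl⟩, zero_add,
      integral_congr hEq]
  -- cost comparison
  set F : ℝ → ℝ := fun s => a (curveOf x₀ t₀ v s) s * ‖f (curveOf x₀ t₀ v s) s + v s‖ ^ p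
    with hF_def
  set F₁ : ℝ → ℝ := fun s => a (curveOf x₀ t₁ v₁ s) s * ‖f (curveOf x₀ t₁ v₁ s) s + v₁ s‖ ^ p
    with hF₁_def
  have hFI : IntegrableOn F (Icc t₀ T) :=
    integrand_integrableOn hp hM hCa hCf hba hbf h0 h0T hadm
  have i1 : IntervalIntegrable F volume t₀ t₁ :=
    intervalIntegrableR_of_integrableOn hFI le_rfl h01 h1T
  have i2 : IntervalIntegrable F volume t₁ T :=
    intervalIntegrableR_of_integrableOn hFI h01 h1T le_rfl
  have hsplit : (∫ s in t₀..T, F s) = (∫ s in t₀..t₁, F s) + ∫ s in t₁..T, F s :=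
    (integral_add_adjacent_intervals i1 i2).symm
  have hseg : (∫ s in t₀..t₁, F s) ≤ M * M ^ p * (t₁ - t₀) := by
    have hae : F ≤ᶠ[ae (volume.restrict (Ioc t₀ t₁))] fun _ => M * M ^ p := by
      have hne : ∀ᵐ s ∂volume, s ∉ ({t₁} : Set ℝ) :=
        measure_eq_zero_iff_ae_notMem.mp Real.volume_singleton
      filter_upwards [ae_restrict_mem measurableSet_Ioc, ae_restrict_of_ae hne] with s hs hneq
      have hlt : s < t₁ := lt_of_le_of_ne hs.2 (by simpa using hneq)
      have hv0 : v s = 0 := indicator_of_notMem (by simpa using not_le.mpr hlt) v₁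
      have hcs : curveOf x₀ t₀ v s = x₀ := key2 s ⟨le_of_lt hs.1, hs.2⟩
      have hs0T : s ∈ Icc (0:ℝ) T := ⟨le_trans h0 (le_of_lt hs.1), le_trans hs.2 h1T⟩
      have hb1 : a (curveOf x₀ t₀ v s) s ≤ M := le_of_abs_le (hba _ _ hs0T)
      have hb2 : ‖f (curveOf x₀ t₀ v s) s + v s‖ ^ p ≤ M ^ p := by
        rw [hcs, hv0, add_zero]
        exact Real.rpow_le_rpow (norm_nonneg _) (hbf _ _ hs0T) (le_trans zero_le_one hp)
      exact mul_le_mul hb1 hb2 (Real.rpow_nonneg (norm_nonneg _) _) (le_of_lt hM)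
    have hFIoc : IntegrableOn F (Ioc t₀ t₁) :=
      hFI.mono_set (fun r hr => ⟨le_of_lt hr.1, le_trans hr.2 h1T⟩)
    have hcI : IntegrableOn (fun _ => M * M ^ p) (Ioc t₀ t₁) volume := by
      exact integrableOn_const measure_Ioc_lt_top.ne
    calc (∫ s in t₀..t₁, F s) = ∫ s in Ioc t₀ t₁, F s := integral_of_le h01
      _ ≤ ∫ _s in Ioc t₀ t₁, M * M ^ p := setIntegral_mono_ae_restrict hFIoc hcI hae
      _ = M * M ^ p * (t₁ - t₀) := by
          rw [setIntegral_const, Real.volume_real_Ioc_of_le h01,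
            smul_eq_mul, mul_comm]
  have htail : (∫ s in t₁..T, F s) = ∫ s in t₁..T, F₁ s := by
    apply integral_congr
    rw [uIcc_of_le h1T]
    intro s hs
    have hvs : v s = v₁ s := indicator_of_mem (mem_Ici.mpr hs.1) v₁
    simp only [hF_def, hF₁_def]
    rw [key3 s hs, hvs]
  have hgT : curveOf x₀ t₀ v T = curveOf x₀ t₁ v₁ T := key3 T ⟨h1T, le_rfl⟩
  have hcost : costOf T p a f g x₀ t₀ v =
      (∫ s in t₀..t₁, F s) + costOf T p a f g x₀ t₁ v₁ := by
    unfold costOf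
    rw [← hF_def, ← hF₁_def, hsplit, htail, hgT]; ring
  have hle : valueFn T p a f g x₀ t₀ ≤ costOf T p a f g x₀ t₀ v :=
    valueFn_le_costOf ⟨hCa, hCf, hCg, hba, hbf, hbg, hδa⟩ hδ h0 h0T hadm
  rw [hcost] at hle
  rw [← hcost₁]
  linarith

end Easy

section Hard
variable {N : ℕ} {T p M δ : ℝ}
  {a : EuclideanSpace ℝ (Fin N) → ℝ → ℝ}
  {f : EuclideanSpace ℝ (Fin N) → ℝ → EuclideanSpace ℝ (Fin N)}
  {g : EuclideanSpace ℝ (Fin N) → ℝ}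

lemma valueFn_hard_dir (hyp : StandardHyps T M δ a f g) (hδ : 0 < δ) (hp : 1 ≤ p) (hM : 0 < M)
    {x₀ : EuclideanSpace ℝ (Fin N)} {t₀ t₁ : ℝ} (h0 : 0 ≤ t₀) (h01 : t₀ < t₁)
    (hcT : t₁ + (t₁ - t₀) ≤ T)
    {v₀ : ℝ → EuclideanSpace ℝ (Fin N)} (hopt : IsOptimalCurve T p a f g x₀ t₀ v₀)
    {R : ℝ}
    (hRb : (∫ s in t₀..(t₁ + (t₁ - t₀)), ‖v₀ s‖) ≤ R) :
    valueFn T p a f g x₀ t₁ ≤ valueFn T p a f g x₀ t₀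
      + M * (M + R / (t₁ - t₀)) ^ p * (t₁ - t₀) := by
  obtain ⟨hadm₀, hcost₀⟩ := hopt
  obtain ⟨hCa, hCf, hCg, hba, hbf, hbg, hδa⟩ := hyp
  set Δ := t₁ - t₀ with hΔ_def
  have hΔ : 0 < Δ := sub_pos.mpr h01
  set c := t₁ + Δ with hc_def
  have h1c : t₁ ≤ c := by rw [hc_def]; linarith
  have h0c : t₀ ≤ c := by rw [hc_def]; linarith
  have h0T : t₀ ≤ T := le_trans h0c hcT
  have h1T : t₁ ≤ T := le_trans h1c hcT
  have h10 : 0 ≤ t₁ := le_trans h0 h01.le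
  have hcT' : c ≤ T := hcT
  set x := curveOf x₀ t₀ v₀ with hx_def
  have hv₀I : IntegrableOn v₀ (Icc t₀ T) := memLp_integrableOn hp hadm₀
  -- norm of x c - x₀
  have hRnn : 0 ≤ R := le_trans (intervalIntegral.integral_nonneg h0c (fun u _ => norm_nonneg _)) hRb
  have hxc : x c - x₀ = ∫ r in t₀..c, v₀ r := by rw [hx_def]; unfold curveOf; rw [add_sub_cancel_left]
  have hxcn : ‖x c - x₀‖ ≤ R := by
    rw [hxc]
    exact le_trans (intervalIntegral.norm_integral_le_integral_norm h0c) hRb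
  set w : EuclideanSpace ℝ (Fin N) := Δ⁻¹ • (x c - x₀) with hw_def
  have hwn : ‖w‖ ≤ R / Δ := by
    rw [hw_def, norm_smul, norm_inv, Real.norm_eq_abs, abs_of_pos hΔ, div_eq_inv_mul]
    exact mul_le_mul_of_nonneg_left hxcn (inv_nonneg.mpr hΔ.le)
  set v' : ℝ → EuclideanSpace ℝ (Fin N) := fun s => if s < c then w else v₀ s with hv'_def
  have hv'w : ∀ s, s < c → v' s = w := fun s hs => if_pos hs
  have hv'v : ∀ s, c ≤ s → v' s = v₀ s := fun s hs => if_neg (not_lt.mpr hs)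
  -- admissibility at t₁
  have hv'eq : v' = ((Iio c).indicator (fun _ => w) + (Ici c).indicator v₀) := by
    funext s
    by_cases h : s < c
    · simp [hv'_def, h, indicator_of_mem (mem_Iio.mpr h),
        indicator_of_notMem (by simpa using not_le.mpr h : s ∉ Ici c)]
    · simp [hv'_def, h, indicator_of_notMem (by simpa using h : s ∉ Iio c),
        indicator_of_mem (mem_Ici.mpr (not_lt.mp h))]
  have hset : Ici c ∩ Icc t₁ T = Icc c T := by
    ext r; simp only [mem_inter_iff, mem_Ici, mem_Icc]
    exact ⟨fun ⟨a1, _, a3⟩ => ⟨a1, a3⟩, fun ⟨a1, a2⟩ => ⟨a1, le_trans h1c a1, a2⟩⟩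
  have hadm' : AdmissibleDeriv T p t₁ v' := by
    unfold AdmissibleDeriv
    rw [hv'eq]
    apply MemLp.add
    · exact (memLp_const w).indicator measurableSet_Iio
    · rw [memLp_indicator_iff_restrict measurableSet_Ici,
        Measure.restrict_restrict measurableSet_Ici, hset]
      exact hadm₀.mono_measure
        (Measure.restrict_mono (Icc_subset_Icc h0c le_rfl) le_rfl)
  have hv'I : IntegrableOn v' (Icc t₁ T) := memLp_integrableOn hp hadm'
  set y := curveOf x₀ t₁ v' with hy_def
  -- curve on [t₁, c]
  have keyA : ∀ s ∈ Icc t₁ c, (∫ r in t₁..s, v' r) = (s - t₁) • w := by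
    intro s hs
    have hcongr : ∫ r in t₁..s, v' r = ∫ r in t₁..s, (fun _ => w) r := by
      apply intervalIntegral.integral_congr_ae
      have hne : ∀ᵐ r ∂volume, r ∉ ({c} : Set ℝ) :=
        measure_eq_zero_iff_ae_notMem.mp Real.volume_singleton
      filter_upwards [hne] with r hrne hrmem
      rw [uIoc_of_le hs.1] at hrmem
      exact hv'w r (lt_of_le_of_ne (le_trans hrmem.2 hs.2) (by simpa using hrne))
    rw [hcongr, intervalIntegral.integral_const]
  have keyB : y c = x c := by
    rw [hy_def]; unfold curveOf
    rw [keyA c ⟨h1c, le_rfl⟩]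
    have : c - t₁ = Δ := by rw [hc_def]; ring
    rw [this, hw_def, smul_smul, mul_inv_cancel₀ (ne_of_gt hΔ), one_smul, add_sub_cancel]
  -- curve on [c, T]
  have keyC : ∀ s ∈ Icc c T, y s = x s := by
    intro s hs
    have i1 : IntervalIntegrable v' volume t₁ c :=
      intervalIntegrable_of_integrableOn hv'I le_rfl h1c hcT'
    have i2 : IntervalIntegrable v' volume c s :=
      intervalIntegrable_of_integrableOn hv'I h1c hs.1 hs.2
    have j1 : IntervalIntegrable v₀ volume t₀ s :=
      intervalIntegrable_of_integrableOn hv₀I le_rfl (le_trans h0c hs.1) hs.2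
    have j2 : IntervalIntegrable v₀ volume t₀ c :=
      intervalIntegrable_of_integrableOn hv₀I le_rfl h0c hcT'
    have hc2 : ∫ r in c..s, v' r = ∫ r in c..s, v₀ r := by
      apply integral_congr
      intro r hr
      rw [uIcc_of_le hs.1] at hr
      exact hv'v r hr.1
    have hsub : ∫ r in c..s, v₀ r = (∫ r in t₀..s, v₀ r) - ∫ r in t₀..c, v₀ r :=
      (integral_interval_sub_left j1 j2).symm
    have hΔw : (c - t₁) • w = ∫ r in t₀..c, v₀ r := by
      have h1 : c - t₁ = Δ := by rw [hc_def]; ring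
      rw [h1, hw_def, smul_smul, mul_inv_cancel₀ (ne_of_gt hΔ), one_smul, hxc]
    rw [hy_def, hx_def]; unfold curveOf
    rw [← integral_add_adjacent_intervals i1 i2, keyA c ⟨h1c, le_rfl⟩, hc2, hsub, hΔw]
    abel
  -- cost comparison
  set F' : ℝ → ℝ := fun s => a (y s) s * ‖f (y s) s + v' s‖ ^ p with hF'_def
  set F₀ : ℝ → ℝ := fun s => a (x s) s * ‖f (x s) s + v₀ s‖ ^ p with hF₀_def
  have hF'I : IntegrableOn F' (Icc t₁ T) :=
    integrand_integrableOn hp hM hCa hCf hba hbf h10 h1T hadm'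
  have hF₀I : IntegrableOn F₀ (Icc t₀ T) :=
    integrand_integrableOn hp hM hCa hCf hba hbf h0 h0T hadm₀
  have i1 : IntervalIntegrable F' volume t₁ c :=
    intervalIntegrableR_of_integrableOn hF'I le_rfl h1c hcT'
  have i2 : IntervalIntegrable F' volume c T :=
    intervalIntegrableR_of_integrableOn hF'I h1c hcT' le_rfl
  have hsplit : (∫ s in t₁..T, F' s) = (∫ s in t₁..c, F' s) + ∫ s in c..T, F' s :=
    (integral_add_adjacent_intervals i1 i2).symm
  have hMw : (0:ℝ) ≤ M + R / Δ := by positivity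
  have hseg : (∫ s in t₁..c, F' s) ≤ M * (M + R / Δ) ^ p * Δ := by
    have hae : F' ≤ᶠ[ae (volume.restrict (Ioc t₁ c))] fun _ => M * (M + R / Δ) ^ p := by
      have hne : ∀ᵐ s ∂volume, s ∉ ({c} : Set ℝ) :=
        measure_eq_zero_iff_ae_notMem.mp Real.volume_singleton
      filter_upwards [ae_restrict_mem measurableSet_Ioc, ae_restrict_of_ae hne] with s hs hneq
      have hlt : s < c := lt_of_le_of_ne hs.2 (by simpa using hneq)
      have hs0T : s ∈ Icc (0:ℝ) T := ⟨le_trans h10 hs.1.le, le_trans hs.2 hcT'⟩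
      have hb1 : a (y s) s ≤ M := le_of_abs_le (hba _ _ hs0T)
      have hb2 : ‖f (y s) s + v' s‖ ^ p ≤ (M + R / Δ) ^ p := by
        rw [hv'w s hlt]
        refine Real.rpow_le_rpow (norm_nonneg _) ?_ (le_trans zero_le_one hp)
        exact le_trans (norm_add_le _ _) (add_le_add (hbf _ _ hs0T) hwn)
      exact mul_le_mul hb1 hb2 (Real.rpow_nonneg (norm_nonneg _) _) hM.le
    have hF'Ioc : IntegrableOn F' (Ioc t₁ c) :=
      hF'I.mono_set (fun r hr => ⟨hr.1.le, le_trans hr.2 hcT'⟩)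
    have hcI : IntegrableOn (fun _ => M * (M + R / Δ) ^ p) (Ioc t₁ c) volume := by
      exact integrableOn_const measure_Ioc_lt_top.ne
    calc (∫ s in t₁..c, F' s) = ∫ s in Ioc t₁ c, F' s := integral_of_le h1c
      _ ≤ ∫ _s in Ioc t₁ c, M * (M + R / Δ) ^ p := setIntegral_mono_ae_restrict hF'Ioc hcI hae
      _ = M * (M + R / Δ) ^ p * Δ := by
          rw [setIntegral_const, Real.volume_real_Ioc_of_le h1c,
            smul_eq_mul, mul_comm]
          congr 1
          rw [hc_def]; ring
  have htail : (∫ s in c..T, F' s) = ∫ s in c..T, F₀ s := by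
    apply integral_congr
    rw [uIcc_of_le hcT']
    intro s hs
    simp only [hF'_def, hF₀_def]
    rw [keyC s hs, hv'v s hs.1]
  have htail2 : (∫ s in c..T, F₀ s) ≤ ∫ s in t₀..T, F₀ s := by
    have j1 : IntervalIntegrable F₀ volume t₀ c :=
      intervalIntegrableR_of_integrableOn hF₀I le_rfl h0c hcT'
    have j2 : IntervalIntegrable F₀ volume c T :=
      intervalIntegrableR_of_integrableOn hF₀I h0c hcT' le_rfl
    have hpos : 0 ≤ ∫ s in t₀..c, F₀ s := by
      apply intervalIntegral.integral_nonneg h0c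
      intro u hu
      have hu0T : u ∈ Icc (0:ℝ) T := ⟨le_trans h0 hu.1, le_trans hu.2 hcT'⟩
      exact mul_nonneg (le_trans hδ.le (hδa _ _ hu0T)) (Real.rpow_nonneg (norm_nonneg _) _)
    rw [← integral_add_adjacent_intervals j1 j2]
    linarith
  have hgT : y T = x T := keyC T ⟨hcT', le_rfl⟩
  have hcost' : costOf T p a f g x₀ t₁ v' ≤
      M * (M + R / Δ) ^ p * Δ + costOf T p a f g x₀ t₀ v₀ := by
    unfold costOf
    rw [← hy_def, ← hx_def, ← hF'_def, ← hF₀_def, hsplit, htail, hgT]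
    linarith
  have hle : valueFn T p a f g x₀ t₁ ≤ costOf T p a f g x₀ t₁ v' :=
    valueFn_le_costOf ⟨hCa, hCf, hCg, hba, hbf, hbg, hδa⟩ hδ h10 h1T hadm'
  rw [← hcost₀]
  linarith

end Hard


set_option maxHeartbeats 1000000 in
/-- time regularity: with `θ > p` the exponent of the integral estimate for
optimal curves, there are constants `K₂, K₃ > 0` depending only on `M, δ, p, T` such that for
every `τ > 0`, every `x₀` and all `t₀ < t₁ ≤ T - τ` with
`t₁ - t₀ ≤ K₃ τ^{(2θp-p-θ)/(p(θ-1))}`, one has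
`|u(x₀,t₀) - u(x₀,t₁)| ≤ K₂ τ^{-(θ-p)/θ} (t₁-t₀)^{(θ-p)/θ}`. -/
theorem time_regularity_of_value_function
    (T p M δ : ℝ) (hT : 0 < T) (hp : 1 < p) (hM : 0 < M) (hδ : 0 < δ)
    (C θ : ℝ) (hC : 0 < C) (hθ : p < θ) :
    ∃ K₂ > (0:ℝ), ∃ K₃ > (0:ℝ),
      ∀ (N : ℕ), 1 ≤ N →
        ∀ (a : EuclideanSpace ℝ (Fin N) → ℝ → ℝ)
          (f : EuclideanSpace ℝ (Fin N) → ℝ → EuclideanSpace ℝ (Fin N))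
          (g : EuclideanSpace ℝ (Fin N) → ℝ), StandardHyps T M δ a f g →
          -- every initial condition admits an optimal curve
          (∀ (x : EuclideanSpace ℝ (Fin N)) (t : ℝ), t ∈ Ico 0 T →
            ∃ v, IsOptimalCurve T p a f g x t v) →
          -- the integral estimate for optimal curves, with constants `C` and `θ`
          (∀ (x : EuclideanSpace ℝ (Fin N)) (t : ℝ), t ∈ Ico 0 T →
            ∀ v : ℝ → EuclideanSpace ℝ (Fin N), IsOptimalCurve T p a f g x t v →
              ∀ h ∈ Icc 0 (T - t),
                ∫ s in t..t + h, ‖v s‖ ≤ C * (T - t) ^ (1 / θ - 1 / p) * h ^ (1 - 1 / θ)) →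
          ∀ τ > (0:ℝ), ∀ (x₀ : EuclideanSpace ℝ (Fin N)) (t₀ t₁ : ℝ),
            0 ≤ t₀ → t₀ < t₁ → t₁ ≤ T - τ →
            t₁ - t₀ ≤ K₃ * τ ^ ((2 * θ * p - p - θ) / (p * (θ - 1))) →
            |valueFn T p a f g x₀ t₀ - valueFn T p a f g x₀ t₁| ≤
              K₂ * τ ^ (-(θ - p) / θ) * (t₁ - t₀) ^ ((θ - p) / θ) := by
  have hp0 : (0:ℝ) < p := lt_trans zero_lt_one hp
  have hθ0 : (0:ℝ) < θ := lt_trans hp0 hθ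
  have hθ1 : (1:ℝ) < θ := lt_trans hp hθ
  set γ : ℝ := (θ - p) / θ with hγ_def
  set β : ℝ := (2 * θ * p - p - θ) / (p * (θ - 1)) with hβ_def
  set e : ℝ := β * (1 - γ) + γ with he_def
  have hγ0 : 0 ≤ γ := div_nonneg (by linarith) hθ0.le
  have hγ1 : γ ≤ 1 := by rw [hγ_def, div_le_one hθ0]; linarith
  have hγ' : γ = 1 - p / θ := by rw [hγ_def]; field_simp
  have hβ1 : 1 ≤ β := by
    rw [hβ_def, le_div_iff₀ (by nlinarith : 0 < p * (θ - 1))]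
    nlinarith
  have hβ0 : 0 ≤ β := le_trans zero_le_one hβ1
  have he0 : 0 ≤ e := by
    rw [he_def]
    have h1 : 0 ≤ 1 - γ := by linarith
    have := mul_nonneg hβ0 h1
    linarith
  set A : ℝ := M * M ^ p * 2 ^ p with hA_def
  set B : ℝ := M * 2 ^ p * C ^ p * 2 ^ p with hB_def
  have hA0 : 0 < A := by positivity
  have hB0 : 0 < B := by positivity
  refine ⟨A * T ^ e + B, by positivity, min 1 (T ^ (1 - β)), by positivity, ?_⟩
  intro N _hN a f g hyp hex hest τ hτ x₀ t₀ t₁ h0 h01 h1T hK₃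
  set K₂ : ℝ := A * T ^ e + B with hK₂_def
  set K₃ : ℝ := min 1 (T ^ (1 - β)) with hK₃_def
  set Δ : ℝ := t₁ - t₀ with hΔ_def
  have hΔ : 0 < Δ := sub_pos.mpr h01
  have hτT : τ ≤ T := by linarith
  -- Δ ≤ τ
  have hΔτ : Δ ≤ τ := by
    have h1 : Δ ≤ K₃ * τ ^ β := hK₃
    have h2 : K₃ ≤ T ^ (1 - β) := min_le_right _ _
    have h3 : τ ^ β = τ ^ (β - 1) * τ := by
      rw [show τ ^ β = τ ^ ((β - 1) + 1) by congr 1; ring, Real.rpow_add hτ, Real.rpow_one]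
    have h4 : τ ^ (β - 1) ≤ T ^ (β - 1) := Real.rpow_le_rpow hτ.le hτT (by linarith)
    have h5 : T ^ (1 - β) * T ^ (β - 1) = 1 := by
      rw [← Real.rpow_add hT]; norm_num
    have hK₃0 : 0 < K₃ := lt_min zero_lt_one (Real.rpow_pos_of_pos hT _)
    have hτβ1 : 0 ≤ τ ^ (β - 1) := Real.rpow_nonneg hτ.le _
    have hT1β : 0 ≤ T ^ (1 - β) := Real.rpow_nonneg hT.le _
    calc Δ ≤ K₃ * τ ^ β := h1
      _ ≤ T ^ (1 - β) * (τ ^ (β - 1) * τ) := by rw [← h3]; exact mul_le_mul_of_nonneg_right h2 (Real.rpow_nonneg hτ.le β)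
      _ ≤ T ^ (1 - β) * (T ^ (β - 1) * τ) := by
          apply mul_le_mul_of_nonneg_left _ hT1β
          exact mul_le_mul_of_nonneg_right h4 hτ.le
      _ = τ := by rw [← mul_assoc, h5, one_mul]
  have hcT : t₁ + Δ ≤ T := by linarith
  have ht₀Ico : t₀ ∈ Ico (0:ℝ) T := ⟨h0, by linarith⟩
  have ht₁Ico : t₁ ∈ Ico (0:ℝ) T := ⟨by linarith, by linarith⟩
  obtain ⟨v₀, hv₀⟩ := hex x₀ t₀ ht₀Ico
  obtain ⟨v₁, hv₁⟩ := hex x₀ t₁ ht₁Ico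
  -- integral estimate for v₀
  set R : ℝ := C * (T - t₀) ^ (1/θ - 1/p) * (2*Δ) ^ (1 - 1/θ) with hR_def
  have hTt : 0 < T - t₀ := by linarith
  have hR0 : 0 ≤ R := by positivity
  have hRb : (∫ s in t₀..(t₁ + (t₁ - t₀)), ‖v₀ s‖) ≤ R := by
    have := hest x₀ t₀ ht₀Ico v₀ hv₀ (2*Δ) ⟨by positivity, by linarith⟩
    have heq : t₀ + 2*Δ = t₁ + (t₁ - t₀) := by rw [hΔ_def]; ring
    rw [heq] at this
    rw [hR_def]; exact this
  -- one-sided bounds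
  have hEasy : valueFn T p a f g x₀ t₀ ≤ valueFn T p a f g x₀ t₁ + M * M ^ p * Δ :=
    valueFn_easy_dir hyp hδ hp.le hM h0 h01.le (by linarith) hv₁
  have hHard : valueFn T p a f g x₀ t₁ ≤ valueFn T p a f g x₀ t₀
      + M * (M + R / Δ) ^ p * Δ :=
    valueFn_hard_dir hyp hδ hp.le hM h0 h01 hcT hv₀ hRb
  -- arithmetic: Δ ≤ T^e * τ^(-γ) * Δ^γ
  have hΔsplit : Δ ≤ T ^ e * τ ^ (-γ) * Δ ^ γ := by
    have s1 : Δ ^ (1 - γ) ≤ (K₃ * τ ^ β) ^ (1 - γ) :=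
      Real.rpow_le_rpow hΔ.le hK₃ (by linarith)
    have hK₃0 : 0 < K₃ := lt_min zero_lt_one (Real.rpow_pos_of_pos hT _)
    have s2 : (K₃ * τ ^ β) ^ (1 - γ) = K₃ ^ (1 - γ) * (τ ^ β) ^ (1 - γ) :=
      Real.mul_rpow hK₃0.le (Real.rpow_nonneg hτ.le _)
    have s3 : K₃ ^ (1 - γ) ≤ 1 :=
      Real.rpow_le_one hK₃0.le (min_le_left _ _) (by linarith)
    have s4 : (τ ^ β) ^ (1 - γ) = τ ^ (β * (1 - γ)) := (Real.rpow_mul hτ.le _ _).symm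
    have s5 : τ ^ (β * (1 - γ)) = τ ^ (-γ) * τ ^ e := by
      rw [← Real.rpow_add hτ]; congr 1; rw [he_def]; ring
    have s6 : τ ^ e ≤ T ^ e := Real.rpow_le_rpow hτ.le hτT he0
    have s7 : Δ ^ (1 - γ) ≤ τ ^ (-γ) * T ^ e := by
      have := le_trans s1 (by
        rw [s2, s4, s5]
        have h1 : K₃ ^ (1-γ) * (τ^(-γ) * τ^e) ≤ 1 * (τ^(-γ) * τ^e) :=
          mul_le_mul_of_nonneg_right s3 (by positivity)
        linarith [h1] : (K₃ * τ ^ β) ^ (1 - γ) ≤ τ ^ (-γ) * τ ^ e)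
      calc Δ ^ (1-γ) ≤ τ ^ (-γ) * τ ^ e := this
        _ ≤ τ ^ (-γ) * T ^ e := mul_le_mul_of_nonneg_left s6 (by positivity)
    have s8 : Δ = Δ ^ (1 - γ) * Δ ^ γ := by
      rw [← Real.rpow_add hΔ, show (1 - γ) + γ = (1:ℝ) by ring, Real.rpow_one]
    calc Δ = Δ ^ (1 - γ) * Δ ^ γ := s8
      _ ≤ (τ ^ (-γ) * T ^ e) * Δ ^ γ :=
          mul_le_mul_of_nonneg_right s7 (Real.rpow_nonneg hΔ.le _)
      _ = T ^ e * τ ^ (-γ) * Δ ^ γ := by ring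
  -- the hard segment bound
  have hSeg : M * (M + R / Δ) ^ p * Δ ≤ A * Δ + B * τ ^ (-γ) * Δ ^ γ := by
    have c1 : (M + R / Δ) ^ p ≤ 2 ^ p * (M ^ p + (R / Δ) ^ p) :=
      rpow_add_le' hM.le (by positivity) hp0.le
    have c2 : (R / Δ) ^ p = R ^ p / Δ ^ p := Real.div_rpow hR0 hΔ.le p
    have hS : ((T - t₀) ^ (1/θ - 1/p)) ^ p = (T - t₀) ^ (-γ) := by
      rw [← Real.rpow_mul hTt.le]; congr 1
      rw [hγ_def]; field_simp; ring
    have hQ : ((2*Δ) ^ (1 - 1/θ)) ^ p = 2 ^ ((1 - 1/θ)*p) * Δ ^ ((1 - 1/θ)*p) := by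
      rw [← Real.rpow_mul (by positivity), Real.mul_rpow (by norm_num) hΔ.le]
    have hRp : R ^ p = C ^ p * ((T - t₀) ^ (1/θ - 1/p)) ^ p * ((2*Δ) ^ (1 - 1/θ)) ^ p := by
      rw [hR_def, Real.mul_rpow (by positivity) (by positivity),
        Real.mul_rpow hC.le (by positivity)]
    have hΔpow : Δ ^ ((1 - 1/θ)*p) / Δ ^ p * Δ = Δ ^ γ := by
      have e1 : Δ ^ ((1 - 1/θ)*p) / Δ ^ p * Δ
          = Δ ^ ((1 - 1/θ)*p) * Δ ^ (-p) * Δ ^ (1:ℝ) := by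
        rw [Real.rpow_neg hΔ.le, Real.rpow_one]; ring
      rw [e1, ← Real.rpow_add hΔ, ← Real.rpow_add hΔ]
      congr 1
      rw [hγ_def]; field_simp; ring
    have c3 : R ^ p / Δ ^ p * Δ
        = C ^ p * (T - t₀) ^ (-γ) * 2 ^ ((1 - 1/θ)*p) * (Δ ^ ((1 - 1/θ)*p) / Δ ^ p * Δ) := by
      rw [hRp, hS, hQ]; ring
    have c4 : (T - t₀) ^ (-γ) ≤ τ ^ (-γ) :=
      Real.rpow_le_rpow_of_nonpos hτ (by linarith) (by linarith)
    have c5 : (2:ℝ) ^ ((1 - 1/θ)*p) ≤ 2 ^ p := by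
      apply Real.rpow_le_rpow_of_exponent_le one_le_two
      have : 0 ≤ 1/θ := by positivity
      nlinarith
    have c6 : R ^ p / Δ ^ p * Δ ≤ C ^ p * τ ^ (-γ) * 2 ^ p * Δ ^ γ := by
      rw [c3, hΔpow]
      have n1 : (0:ℝ) ≤ C ^ p := Real.rpow_nonneg hC.le _
      have n2 : (0:ℝ) ≤ Δ ^ γ := Real.rpow_nonneg hΔ.le _
      have n3 : (0:ℝ) ≤ (2:ℝ) ^ ((1 - 1/θ)*p) := Real.rpow_nonneg (by norm_num) _
      have n4 : (0:ℝ) ≤ τ ^ (-γ) := Real.rpow_nonneg hτ.le _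
      have m1 : (T - t₀) ^ (-γ) * 2 ^ ((1 - 1/θ)*p) ≤ τ ^ (-γ) * 2 ^ p :=
        mul_le_mul c4 c5 n3 n4
      calc C ^ p * (T - t₀) ^ (-γ) * 2 ^ ((1 - 1/θ)*p) * Δ ^ γ
          = C ^ p * ((T - t₀) ^ (-γ) * 2 ^ ((1 - 1/θ)*p)) * Δ ^ γ := by ring
        _ ≤ C ^ p * (τ ^ (-γ) * 2 ^ p) * Δ ^ γ :=
            mul_le_mul_of_nonneg_right (mul_le_mul_of_nonneg_left m1 n1) n2
        _ = C ^ p * τ ^ (-γ) * 2 ^ p * Δ ^ γ := by ring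
    have hMΔ : 0 ≤ M * Δ := by positivity
    calc M * (M + R / Δ) ^ p * Δ ≤ M * (2 ^ p * (M ^ p + (R / Δ) ^ p)) * Δ :=
          mul_le_mul_of_nonneg_right (mul_le_mul_of_nonneg_left c1 hM.le) hΔ.le
      _ = A * Δ + M * 2 ^ p * (R ^ p / Δ ^ p * Δ) := by rw [c2, hA_def]; ring
      _ ≤ A * Δ + M * 2 ^ p * (C ^ p * τ ^ (-γ) * 2 ^ p * Δ ^ γ) :=
          add_le_add_right (mul_le_mul_of_nonneg_left c6 (by positivity : (0:ℝ) ≤ M * 2 ^ p)) _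
      _ = A * Δ + B * τ ^ (-γ) * Δ ^ γ := by rw [hB_def]; ring
  clear_value γ β e A B K₂ K₃ Δ R
  have hAΔ : A * Δ ≤ A * T ^ e * τ ^ (-γ) * Δ ^ γ := by
    calc A * Δ ≤ A * (T ^ e * τ ^ (-γ) * Δ ^ γ) := mul_le_mul_of_nonneg_left hΔsplit hA0.le
      _ = A * T ^ e * τ ^ (-γ) * Δ ^ γ := by ring
  have hEasy' : M * M ^ p * Δ ≤ A * Δ := by
    have h2p : (1:ℝ) ≤ 2 ^ p := by
      rw [show (1:ℝ) = 2 ^ (0:ℝ) by norm_num]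
      exact Real.rpow_le_rpow_of_exponent_le one_le_two hp0.le
    have hMM : (0:ℝ) ≤ M * M ^ p := by positivity
    calc M * M ^ p * Δ = M * M ^ p * 1 * Δ := by ring
      _ ≤ M * M ^ p * 2 ^ p * Δ :=
          mul_le_mul_of_nonneg_right (mul_le_mul_of_nonneg_left h2p hMM) hΔ.le
      _ = A * Δ := by rw [hA_def]
  -- conclusion
  have hgoal : -(θ - p) / θ = -γ := by rw [hγ_def]; ring
  have hKΔ : K₂ * τ ^ (-γ) * Δ ^ γ = A * T ^ e * τ ^ (-γ) * Δ ^ γ + B * τ ^ (-γ) * Δ ^ γ := by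
    rw [hK₂_def]; ring
  have hBnn : 0 ≤ B * τ ^ (-γ) * Δ ^ γ :=
    mul_nonneg (mul_nonneg hB0.le (Real.rpow_nonneg hτ.le _)) (Real.rpow_nonneg hΔ.le _)
  rw [hgoal, abs_sub_le_iff]
  constructor
  · linarith
  · linarith
end
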